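/- Let v₀(y) = (3/y²)·e^{y²/4}·(−y + (2+y²)·D₊(y/2)) with D₊ the Dawson integral. Then v₀'(y) = 12·e^{y²/4}·y^{−3}·(y/2 − D₊(y/2)) for all y > 0, and v₀'(y) > 0 for all y > 0. -/

import Mathlib

noncomputable def dawson (y : ℝ) : ℝ := Real.exp (-y^2) * ∫ x in (0:ℝ)..y, Real.exp (x^2)

noncomputable def v₀ (y : ℝ) : ℝ :=
  3 / y^2 * Real.exp (y^2/4) * (-y + (2 + y^2) * dawson (y/2))

lemma cont_exp_sq : Continuous (fun x : ℝ => Real.exp (x^2)) :=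
  Real.continuous_exp.comp (continuous_pow 2)

lemma dawson_hasDerivAt (y : ℝ) :
    HasDerivAt dawson (1 - 2 * y * dawson y) y := by
  have hI : HasDerivAt (fun t : ℝ => ∫ x in (0:ℝ)..t, Real.exp (x^2)) (Real.exp (y^2)) y := by
    exact intervalIntegral.integral_hasDerivAt_right
      (cont_exp_sq.intervalIntegrable 0 y)
      (cont_exp_sq.aestronglyMeasurable.stronglyMeasurableAtFilter)
      cont_exp_sq.continuousAt
  have hE : HasDerivAt (fun t : ℝ => Real.exp (-t^2)) (-2 * y * Real.exp (-y^2)) y := by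
    have h1 : HasDerivAt (fun t : ℝ => -t^2) (-(2*y)) y := by
      exact ((hasDerivAt_pow 2 y).neg).congr_deriv (by norm_num)
    simpa [mul_comm, mul_assoc] using h1.exp
  have := hE.mul hI
  unfold dawson
  refine this.congr_deriv ?_
  have hexp : Real.exp (-y^2) * Real.exp (y^2) = 1 := by
    rw [← Real.exp_add]; simp
  rw [hexp]; ring

lemma dawson_lt (z : ℝ) (hz : 0 < z) : dawson z < z := by
  have h : (∫ x in (0:ℝ)..z, Real.exp (x^2)) < ∫ _x in (0:ℝ)..z, Real.exp (z^2) := by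
    apply intervalIntegral.integral_lt_integral_of_continuousOn_of_le_of_exists_lt hz
      cont_exp_sq.continuousOn continuous_const.continuousOn
    · intro x hx
      exact Real.exp_le_exp.2 (by nlinarith [hx.1, hx.2])
    · exact ⟨0, ⟨le_refl 0, hz.le⟩, Real.exp_lt_exp.2 (by nlinarith)⟩
  rw [intervalIntegral.integral_const, smul_eq_mul, sub_zero] at h
  unfold dawson
  calc Real.exp (-z^2) * ∫ x in (0:ℝ)..z, Real.exp (x^2)
      < Real.exp (-z^2) * (z * Real.exp (z^2)) := by
        exact mul_lt_mul_of_pos_left h (Real.exp_pos _)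
    _ = z := by rw [← mul_assoc, mul_comm (Real.exp (-z^2)) z, mul_assoc, ← Real.exp_add]; simp

theorem v0_deriv (y : ℝ) (hy : 0 < y) :
    deriv v₀ y = 12 * Real.exp (y^2/4) / y^3 * (y/2 - dawson (y/2)) ∧
    0 < deriv v₀ y := by
  have hy0 : y ≠ 0 := hy.ne'
  set D := dawson (y/2) with hD
  -- derivative of y ↦ dawson (y/2)
  have hDd : HasDerivAt (fun t : ℝ => dawson (t/2)) ((1 - 2 * (y/2) * D) * (1/2)) y := by
    have := (dawson_hasDerivAt (y/2)).comp y ((hasDerivAt_id y).div_const 2)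
    exact this
  have hA : HasDerivAt (fun t : ℝ => 3 / t^2) (-6 / y^3) y := by
    have := (hasDerivAt_const y (3:ℝ)).div (hasDerivAt_pow 2 y) (pow_ne_zero 2 hy0)
    refine this.congr_deriv ?_
    field_simp
    ring
  have hB : HasDerivAt (fun t : ℝ => Real.exp (t^2/4)) (y/2 * Real.exp (y^2/4)) y := by
    have h1 : HasDerivAt (fun t : ℝ => t^2/4) (y/2) y := by
      simpa using ((hasDerivAt_pow 2 y).div_const 4).congr_deriv (by ring)
    simpa [mul_comm] using h1.exp
  have hC : HasDerivAt (fun t : ℝ => -t + (2 + t^2) * dawson (t/2))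
      (-1 + ((2 * y) * D + (2 + y^2) * ((1 - 2 * (y/2) * D) * (1/2)))) y := by
    have h1 : HasDerivAt (fun t : ℝ => (2 + t^2)) (2*y) y := by
      simpa using (hasDerivAt_pow 2 y).const_add 2
    exact (hasDerivAt_id y).neg.add (h1.mul hDd)
  have hv : HasDerivAt v₀
      ((-6 / y^3 * Real.exp (y^2/4) + 3 / y^2 * (y/2 * Real.exp (y^2/4))) *
        (-y + (2 + y^2) * D) +
       3 / y^2 * Real.exp (y^2/4) *
        (-1 + ((2 * y) * D + (2 + y^2) * ((1 - 2 * (y/2) * D) * (1/2))))) y := by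
    exact (hA.mul hB).mul hC
  have hderiv : deriv v₀ y = 12 * Real.exp (y^2/4) / y^3 * (y/2 - D) := by
    rw [hv.deriv]
    field_simp
    ring
  refine ⟨hderiv, ?_⟩
  rw [hderiv]
  have h1 : 0 < 12 * Real.exp (y^2/4) / y^3 := by positivity
  have h2 : 0 < y/2 - D := sub_pos.2 (dawson_lt (y/2) (by linarith))
  exact mul_pos h1 h2
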